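/- Let (Ñ_j(L)) be a nondecreasing nonnegative function and N_j(L) a nondecreasing function with N_j(L) ∼ e^{hL}/(hL) as L → ∞ for some h > 0, such that Ñ_j(L) ≤ N_j(L) for all L and Σ_{k=1}^{L} Ñ_j(k) ≥ C e^{hL}/L for large L and some C > 0. Then there exist C' > 0 and M > 0 such that Ñ_j(L) ≥ C' e^{hL}/L for all sufficiently large L. -/

import Mathlib

/-!
STATEMENT 3: Let `Ñ` be a nondecreasing nonnegative function and `N` a nondecreasing
function with `N L ∼ e^{hL}/(hL)` as `L → ∞` for some `h > 0`, such that `Ñ L ≤ N L`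
for all `L` and `∑_{k=1}^{L} Ñ k ≥ C e^{hL}/L` for large `L` and some `C > 0`.
Then there is `C' > 0` such that `Ñ L ≥ C' e^{hL}/L` for all sufficiently large `L`.
-/

open Filter Real Finset

private lemma geomB (h : ℝ) (hh : 0 < h) (a b : ℕ) :
    ∑ k ∈ Finset.Ioc a b, Real.exp (h * k) ≤ Real.exp (h * b) * Real.exp h / (Real.exp h - 1) := by
  have hx : (1:ℝ) < Real.exp h := Real.one_lt_exp_iff.mpr hh
  have hx0 : (0:ℝ) < Real.exp h - 1 := by linarith
  have h1 : ∑ k ∈ Finset.Ioc a b, Real.exp (h * k) ≤ ∑ k ∈ Finset.range (b+1), (Real.exp h)^k := by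
    have heq : ∀ k : ℕ, Real.exp (h * k) = (Real.exp h)^k := by
      intro k; rw [mul_comm, Real.exp_nat_mul]
    simp_rw [heq]
    apply Finset.sum_le_sum_of_subset_of_nonneg
    · intro k hk
      simp only [Finset.mem_Ioc] at hk
      simp [Nat.lt_succ_of_le hk.2]
    · intro k _ _; positivity
  have h2 : ∑ k ∈ Finset.range (b+1), (Real.exp h)^k = ((Real.exp h)^(b+1) - 1)/(Real.exp h - 1) :=
    geom_sum_eq (ne_of_gt hx) _
  have h4 : (Real.exp h)^(b+1) = Real.exp (h * b) * Real.exp h := by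
    rw [pow_succ, mul_comm h, Real.exp_nat_mul]
  have h3 : ((Real.exp h)^(b+1) - 1)/(Real.exp h - 1) ≤ (Real.exp h)^(b+1)/(Real.exp h - 1) := by
    gcongr
    linarith
  calc ∑ k ∈ Finset.Ioc a b, Real.exp (h * k) ≤ _ := h1
    _ = _ := h2
    _ ≤ (Real.exp h)^(b+1)/(Real.exp h - 1) := h3
    _ = _ := by rw [h4]

private lemma natPoly (a : ℝ) (ha : 0 < a) (k : ℕ) :
    Tendsto (fun L : ℕ => (L:ℝ)^k * Real.exp (-(a*L))) atTop (nhds 0) := by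
  have h1 : Tendsto (fun x:ℝ => (a*x)^k * Real.exp (-(a*x))) atTop (nhds 0) :=
    (tendsto_pow_mul_exp_neg_atTop_nhds_zero k).comp (Tendsto.const_mul_atTop ha tendsto_id)
  have h2 : Tendsto (fun x:ℝ => (1/a^k) * ((a*x)^k * Real.exp (-(a*x)))) atTop (nhds 0) := by
    simpa using h1.const_mul (1/a^k)
  have h3 : (fun x:ℝ => (1/a^k) * ((a*x)^k * Real.exp (-(a*x))))
      = fun x:ℝ => x^k * Real.exp (-(a*x)) := by
    funext x
    rw [mul_pow]
    field_simp
  rw [h3] at h2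
  exact h2.comp tendsto_natCast_atTop_atTop

theorem stmt3 (h : ℝ) (hh : 0 < h) (Nt N : ℕ → ℝ)
    (hNt0 : ∀ L, 0 ≤ Nt L) (hNtmono : Monotone Nt) (hNmono : Monotone N)
    (hasymp : Filter.Tendsto (fun L : ℕ => N L * (h * L) / Real.exp (h * L))
      Filter.atTop (nhds 1))
    (hle : ∀ L, Nt L ≤ N L)
    (hsum : ∃ C : ℝ, 0 < C ∧ ∀ᶠ L : ℕ in Filter.atTop,
      C * Real.exp (h * L) / L ≤ ∑ k ∈ Finset.Icc 1 L, Nt k) :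
    ∃ C' : ℝ, 0 < C' ∧ ∀ᶠ L : ℕ in Filter.atTop,
      C' * Real.exp (h * L) / L ≤ Nt L := by
  obtain ⟨C, hC, hsum⟩ := hsum
  have hx : (1:ℝ) < Real.exp h := Real.one_lt_exp_iff.mpr hh
  set G : ℝ := Real.exp h / (Real.exp h - 1) with hGdef
  have hG0 : 0 < G := div_pos (Real.exp_pos h) (by linarith)
  -- Step 1: eventual upper bound on N
  have hNbd : ∀ᶠ k : ℕ in atTop, N k ≤ (2/h) * Real.exp (h * k) / k := by
    have h2 : ∀ᶠ k : ℕ in atTop, N k * (h * k) / Real.exp (h * k) ≤ 2 :=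
      hasymp.eventually (eventually_le_nhds one_lt_two)
    filter_upwards [h2, eventually_ge_atTop 1] with k hk hk1
    have hk0 : (0:ℝ) < k := by exact_mod_cast hk1
    rw [div_le_iff₀ (Real.exp_pos _)] at hk
    rw [div_mul_eq_mul_div, div_div, le_div_iff₀ (by positivity : (0:ℝ) < h*(k:ℝ))]
    exact hk
  obtain ⟨K₀, hK₀⟩ := eventually_atTop.mp hNbd
  -- Step 2: choose m
  obtain ⟨m, hm1, hmsml⟩ : ∃ m : ℕ, 1 ≤ m ∧ (8/h) * G * Real.exp (-(h*m)) ≤ C/4 := by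
    have hten : Tendsto (fun m:ℕ => (8/h)*G*Real.exp (-(h*(m:ℝ)))) atTop (nhds 0) := by
      have hb : Tendsto (fun m:ℕ => Real.exp (-(h*(m:ℝ)))) atTop (nhds 0) := by
        have heq : ∀ m:ℕ, Real.exp (-(h*(m:ℝ))) = (Real.exp (-h))^m := by
          intro m; rw [← Real.exp_nat_mul]; ring_nf
        simp_rw [heq]
        exact tendsto_pow_atTop_nhds_zero_of_lt_one (le_of_lt (Real.exp_pos _))
          (Real.exp_lt_one_iff.mpr (by linarith))
      simpa using hb.const_mul ((8/h)*G)
    obtain ⟨m, hm1, hm2⟩ := ((hten.eventually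
      (eventually_le_nhds (by positivity : (0:ℝ) < C/4))).and (eventually_ge_atTop 1)).exists
    exact ⟨m, hm2, hm1⟩
  have hm0 : (0:ℝ) < m := by exact_mod_cast hm1
  -- Step 3: smallness of lower-order terms
  have hsmall : ∀ᶠ L : ℕ in atTop,
      (K₀:ℝ) * N K₀ + (2/h) * ((L:ℝ) * Real.exp (h*(L:ℝ)/2))
        ≤ C/4 * Real.exp (h*(L:ℝ))/(L:ℝ) := by
    have hlim : Tendsto (fun L:ℕ =>
        ((K₀:ℝ) * N K₀ + (2/h) * ((L:ℝ) * Real.exp (h*(L:ℝ)/2))) * (L:ℝ) / Real.exp (h*(L:ℝ)))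
        atTop (nhds 0) := by
      have h1 := (natPoly h hh 1).const_mul ((K₀:ℝ) * N K₀)
      have h2 := (natPoly (h/2) (by positivity) 2).const_mul (2/h)
      have h3 := h1.add h2
      simp only [mul_zero, add_zero] at h3
      convert h3 using 2 with L
      have e1 : Real.exp (-(h*(L:ℝ))) = (Real.exp (h*(L:ℝ)))⁻¹ := Real.exp_neg _
      have e2 : Real.exp (-((h/2)*(L:ℝ))) = Real.exp (h*(L:ℝ)/2) / Real.exp (h*(L:ℝ)) := by
        rw [← Real.exp_sub]; congr 1; ring
      rw [e1, e2]
      have := Real.exp_ne_zero (h*(L:ℝ))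
      field_simp
    filter_upwards [hlim.eventually (eventually_le_nhds (by positivity : (0:ℝ) < C/4)),
      eventually_ge_atTop 1] with L hL hL1
    have L0 : (0:ℝ) < L := by exact_mod_cast hL1
    rw [div_le_iff₀ (Real.exp_pos _)] at hL
    rw [le_div_iff₀ L0]
    exact hL
  -- Conclusion
  refine ⟨C/(2*m), by positivity, ?_⟩
  filter_upwards [hsum, hsmall, eventually_ge_atTop (2*m + 2*K₀ + 2)] with L hLsum hLsml hLge
  set n := L - m with hn
  set p := n / 2 with hp
  have hmL : m ≤ L := by omega
  have hK0n : K₀ ≤ n := by omega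
  have hpn : p ≤ n := by omega
  have hn2 : 2 ≤ n := by omega
  have hL1 : 1 ≤ L := by omega
  have L0 : (0:ℝ) < L := by exact_mod_cast hL1
  have n0 : (0:ℝ) < n := by exact_mod_cast (by omega : 0 < n)
  have nR : (n:ℝ) = (L:ℝ) - m := by
    rw [hn]; push_cast [Nat.cast_sub hmL]; ring
  have nL2 : (L:ℝ)/2 ≤ (n:ℝ) := by
    rw [nR]
    have : (2*m : ℕ) ≤ L := by omega
    have : (2*(m:ℝ)) ≤ (L:ℝ) := by exact_mod_cast this
    linarith
  have pL2 : (p:ℝ) ≤ (L:ℝ)/2 := by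
    have h1 : (p:ℝ) ≤ (n:ℝ)/2 := by
      have := Nat.cast_div_le (α := ℝ) (m := n) (n := 2)
      simpa using this
    have h2 : (n:ℝ) ≤ (L:ℝ) := by exact_mod_cast (by omega : n ≤ L)
    linarith
  have hEL : (0:ℝ) < Real.exp (h * L) := Real.exp_pos _
  -- split the main sum
  have S1 : ∑ k ∈ Finset.Icc 1 L, Nt k
      = ∑ k ∈ Finset.Ioc 0 n, Nt k + ∑ k ∈ Finset.Ioc n L, Nt k := by
    rw [← Finset.Icc_add_one_left_eq_Ioc]
    exact (Finset.sum_Ioc_consecutive _ (Nat.zero_le n) (by omega : n ≤ L)).symm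
  have S2 : ∑ k ∈ Finset.Ioc n L, Nt k ≤ (m:ℝ) * Nt L := by
    have hcard : (Finset.Ioc n L).card = m := by rw [Nat.card_Ioc]; omega
    calc ∑ k ∈ Finset.Ioc n L, Nt k ≤ (Finset.Ioc n L).card • Nt L :=
          Finset.sum_le_card_nsmul _ _ _ (fun k hk => hNtmono (Finset.mem_Ioc.mp hk).2)
      _ = (m:ℝ) * Nt L := by rw [hcard, nsmul_eq_mul]
  -- bound the head sum
  have S5 : ∑ k ∈ Finset.Ioc 0 K₀, N k ≤ (K₀:ℝ) * N K₀ := by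
    calc ∑ k ∈ Finset.Ioc 0 K₀, N k ≤ (Finset.Ioc 0 K₀).card • N K₀ :=
          Finset.sum_le_card_nsmul _ _ _ (fun k hk => hNmono (Finset.mem_Ioc.mp hk).2)
      _ = (K₀:ℝ) * N K₀ := by rw [Nat.card_Ioc, nsmul_eq_mul]; norm_num
  have S9 : ∑ k ∈ Finset.Ioc 0 p, Real.exp (h*k)/(k:ℝ) ≤ (L:ℝ) * Real.exp (h*(L:ℝ)/2) := by
    have hbd : ∀ k ∈ Finset.Ioc 0 p, Real.exp (h*k)/(k:ℝ) ≤ Real.exp (h*(L:ℝ)/2) := by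
      intro k hk
      obtain ⟨hk0, hkp⟩ := Finset.mem_Ioc.mp hk
      have hk1 : (1:ℝ) ≤ k := by exact_mod_cast hk0
      have : Real.exp (h*k)/(k:ℝ) ≤ Real.exp (h*k) :=
        div_le_self (le_of_lt (Real.exp_pos _)) hk1
      refine this.trans (Real.exp_le_exp.mpr ?_)
      have hkp' : (k:ℝ) ≤ (p:ℝ) := by exact_mod_cast hkp
      nlinarith [pL2]
    calc ∑ k ∈ Finset.Ioc 0 p, Real.exp (h*k)/(k:ℝ)
        ≤ (Finset.Ioc 0 p).card • Real.exp (h*(L:ℝ)/2) :=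
          Finset.sum_le_card_nsmul _ _ _ hbd
      _ = (p:ℝ) * Real.exp (h*(L:ℝ)/2) := by rw [Nat.card_Ioc, nsmul_eq_mul]; norm_num
      _ ≤ (L:ℝ) * Real.exp (h*(L:ℝ)/2) := by
          have : (p:ℝ) ≤ (L:ℝ) := by exact_mod_cast (by omega : p ≤ L)
          exact mul_le_mul_of_nonneg_right this (le_of_lt (Real.exp_pos _))
  have S10 : ∑ k ∈ Finset.Ioc p n, Real.exp (h*k)/(k:ℝ)
      ≤ 4 * G * Real.exp (-(h*m)) * Real.exp (h*L) / L := by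
    have hp1 : (0:ℝ) < (p:ℝ) + 1 := by positivity
    have step1 : ∑ k ∈ Finset.Ioc p n, Real.exp (h*k)/(k:ℝ)
        ≤ (∑ k ∈ Finset.Ioc p n, Real.exp (h*k)) / ((p:ℝ)+1) := by
      rw [Finset.sum_div]
      apply Finset.sum_le_sum
      intro k hk
      obtain ⟨hkp, _⟩ := Finset.mem_Ioc.mp hk
      have hpk : (p:ℝ)+1 ≤ (k:ℝ) := by exact_mod_cast hkp
      exact div_le_div_of_nonneg_left (Real.exp_pos _).le hp1 hpk
    have step2 : (∑ k ∈ Finset.Ioc p n, Real.exp (h*k)) / ((p:ℝ)+1)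
        ≤ (Real.exp (h*n) * G) / ((p:ℝ)+1) := by
      gcongr
      calc ∑ k ∈ Finset.Ioc p n, Real.exp (h*k)
          ≤ Real.exp (h*n) * Real.exp h / (Real.exp h - 1) := geomB h hh p n
        _ = Real.exp (h*n) * G := by rw [hGdef]; ring
    have step3 : (Real.exp (h*n) * G) / ((p:ℝ)+1) ≤ 2 * (Real.exp (h*n) * G) / (n:ℝ) := by
      rw [div_le_div_iff₀ hp1 n0]
      have hnp : (n:ℝ) ≤ 2*((p:ℝ)+1) := by
        have : n ≤ 2*(p+1) := by omega
        exact_mod_cast this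
      have := mul_le_mul_of_nonneg_left hnp (by positivity : (0:ℝ) ≤ Real.exp (h*(n:ℝ))*G)
      linarith
    have step4 : 2 * (Real.exp (h*n) * G) / (n:ℝ) ≤ 4 * (Real.exp (h*n) * G) / (L:ℝ) := by
      rw [div_le_div_iff₀ n0 L0]
      have := mul_le_mul_of_nonneg_left nL2 (by positivity : (0:ℝ) ≤ 4*(Real.exp (h*(n:ℝ))*G))
      linarith
    have hexps : Real.exp (h*(n:ℝ)) = Real.exp (-(h*m)) * Real.exp (h*L) := by
      rw [← Real.exp_add]; congr 1; rw [nR]; ring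
    calc ∑ k ∈ Finset.Ioc p n, Real.exp (h*k)/(k:ℝ)
        ≤ _ := step1
      _ ≤ _ := step2
      _ ≤ _ := step3
      _ ≤ 4 * (Real.exp (h*n) * G) / (L:ℝ) := step4
      _ = 4 * G * Real.exp (-(h*m)) * Real.exp (h*L) / L := by rw [hexps]; ring
  -- assemble bound on head
  have Shead : ∑ k ∈ Finset.Ioc 0 n, Nt k ≤ C/2 * Real.exp (h*L) / L := by
    have T1 : ∑ k ∈ Finset.Ioc 0 n, Nt k ≤ ∑ k ∈ Finset.Ioc 0 n, N k :=
      Finset.sum_le_sum (fun k _ => hle k)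
    have T2 : ∑ k ∈ Finset.Ioc 0 n, N k
        = ∑ k ∈ Finset.Ioc 0 K₀, N k + ∑ k ∈ Finset.Ioc K₀ n, N k :=
      (Finset.sum_Ioc_consecutive _ (Nat.zero_le _) hK0n).symm
    have T3 : ∑ k ∈ Finset.Ioc K₀ n, N k
        ≤ (2/h) * ∑ k ∈ Finset.Ioc K₀ n, Real.exp (h*k)/(k:ℝ) := by
      rw [Finset.mul_sum]
      apply Finset.sum_le_sum
      intro k hk
      obtain ⟨hkK, _⟩ := Finset.mem_Ioc.mp hk
      rw [← mul_div_assoc]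
      exact hK₀ k hkK.le
    have T4 : ∑ k ∈ Finset.Ioc K₀ n, Real.exp (h*k)/(k:ℝ)
        ≤ ∑ k ∈ Finset.Ioc 0 n, Real.exp (h*k)/(k:ℝ) := by
      apply Finset.sum_le_sum_of_subset_of_nonneg (Finset.Ioc_subset_Ioc_left (Nat.zero_le _))
      intro k _ _; positivity
    have T5 : ∑ k ∈ Finset.Ioc 0 n, Real.exp (h*k)/(k:ℝ)
        = ∑ k ∈ Finset.Ioc 0 p, Real.exp (h*k)/(k:ℝ)
          + ∑ k ∈ Finset.Ioc p n, Real.exp (h*k)/(k:ℝ) :=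
      (Finset.sum_Ioc_consecutive _ (Nat.zero_le _) hpn).symm
    have hthird : (2/h) * (4 * G * Real.exp (-(h*m)) * Real.exp (h*L) / L)
        ≤ C/4 * Real.exp (h*L) / L := by
      have hq : (0:ℝ) < Real.exp (h*L) / L := by positivity
      have : (2/h) * (4 * G * Real.exp (-(h*m)) * Real.exp (h*L) / L)
          = ((8/h) * G * Real.exp (-(h*m))) * (Real.exp (h*L) / L) := by ring
      rw [this]
      calc ((8/h) * G * Real.exp (-(h*m))) * (Real.exp (h*L) / L)
          ≤ (C/4) * (Real.exp (h*L) / L) := mul_le_mul_of_nonneg_right hmsml hq.le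
        _ = C/4 * Real.exp (h*L) / L := by ring
    have hh2 : (0:ℝ) < 2/h := by positivity
    calc ∑ k ∈ Finset.Ioc 0 n, Nt k ≤ ∑ k ∈ Finset.Ioc 0 n, N k := T1
      _ = _ := T2
      _ ≤ (K₀:ℝ) * N K₀ + (2/h) * ∑ k ∈ Finset.Ioc K₀ n, Real.exp (h*k)/(k:ℝ) := by
          linarith [S5, T3]
      _ ≤ (K₀:ℝ) * N K₀ + (2/h) * (∑ k ∈ Finset.Ioc 0 p, Real.exp (h*k)/(k:ℝ)
            + ∑ k ∈ Finset.Ioc p n, Real.exp (h*k)/(k:ℝ)) := by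
          have h' := mul_le_mul_of_nonneg_left (T4.trans_eq T5) hh2.le
          linarith
      _ ≤ ((K₀:ℝ) * N K₀ + (2/h) * ((L:ℝ) * Real.exp (h*(L:ℝ)/2)))
            + (2/h) * (4 * G * Real.exp (-(h*m)) * Real.exp (h*L) / L) := by
          have h9 := mul_le_mul_of_nonneg_left (add_le_add S9 S10) hh2.le
          linarith
      _ ≤ C/4 * Real.exp (h*L) / L + C/4 * Real.exp (h*L) / L := by
          linarith [hLsml, hthird]
      _ = C/2 * Real.exp (h*L) / L := by ring
  -- finish
  have hfin : C/2 * Real.exp (h*L) / L ≤ (m:ℝ) * Nt L := by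
    have := hLsum
    rw [S1] at this
    have : C * Real.exp (h*L) / L - C/2 * Real.exp (h*L) / L ≤ ∑ k ∈ Finset.Ioc n L, Nt k := by
      linarith [Shead]
    calc C/2 * Real.exp (h*L) / L
        = C * Real.exp (h*L) / L - C/2 * Real.exp (h*L) / L := by ring
      _ ≤ ∑ k ∈ Finset.Ioc n L, Nt k := this
      _ ≤ (m:ℝ) * Nt L := S2
  have key : C/(2*(m:ℝ)) = C/2/(m:ℝ) := (div_div C 2 (m:ℝ)).symm
  rw [key, div_mul_eq_mul_div, div_right_comm, div_le_iff₀ hm0]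
  linarith [hfin]
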